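/- Let q > 1 be real, λ = q − q^{−1}, let α, β be nonzero complex numbers with α/β = q^{−γ} for a real γ, and let ψ₀(x) = e_q(−i q^{−γ} λ q^{−1/2} x). Then ψ₀ is well defined and nonzero at every real x, and for every real x ≠ 0 one has (a ψ₀)(x) = α q ψ₀(q² x) − i β q^{1/2} (D_q ψ₀)(q x) = 0; i.e. ψ₀ is annihilated by the lowering operator a = α U^{−2} + β U^{−1} P of the q-oscillator realized on the quantum line. -/

import Mathlib

open scoped BigOperators

/-- The infinite q-shifted factorial `(a;p)_∞ = ∏_{i=0}^∞ (1 - a p^i)`. -/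
noncomputable def qPochInf (a p : ℂ) : ℂ :=
  ∏' i : ℕ, (1 - a * p ^ i)

/-- The q-exponential `e_q(z) = 1/(z;q^{-2})_∞`. -/
noncomputable def qExp (q : ℝ) (z : ℂ) : ℂ :=
  (qPochInf z ((q : ℂ) ^ (-2 : ℤ)))⁻¹

/-- The q-derivative `(D_q f)(x) = (f(qx) - f(q⁻¹x)) / (x(q - q⁻¹))`. -/
noncomputable def Dq (q : ℝ) (f : ℝ → ℂ) (x : ℝ) : ℂ :=
  (f (q * x) - f (q⁻¹ * x)) / ((x : ℂ) * ((q : ℂ) - (q : ℂ)⁻¹))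

/-- The ground state wave function `ψ₀(x) = e_q(-i q^{-γ} λ q^{-1/2} x)`,
where `λ = q - q⁻¹`. -/
noncomputable def psi0 (q γ : ℝ) (x : ℝ) : ℂ :=
  qExp q (-Complex.I * ((q ^ (-γ) * (q - q⁻¹) * q ^ (-(1 : ℝ) / 2) : ℝ) : ℂ) * (x : ℂ))

/- Auxiliary lemmas -/

lemma summable_log_one_sub (a p : ℂ) (hp : ‖p‖ < 1) :
    Summable fun i : ℕ => Complex.log (1 - a * p ^ i) := by
  have h0 : Filter.Tendsto (fun n : ℕ => ‖a‖ * ‖p‖ ^ n) Filter.atTop (nhds 0) := by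
    simpa using (tendsto_pow_atTop_nhds_zero_of_lt_one (norm_nonneg p) hp).const_mul ‖a‖
  have h1 : ∀ᶠ n : ℕ in Filter.atTop, ‖a‖ * ‖p‖ ^ n < 1/2 :=
    h0.eventually_lt_const (by norm_num)
  obtain ⟨N, hN⟩ := Filter.eventually_atTop.mp h1
  rw [← summable_nat_add_iff N]
  apply Summable.of_norm
  apply Summable.of_nonneg_of_le (fun n => norm_nonneg _) (fun n => ?_)
    ((summable_geometric_of_lt_one (norm_nonneg p) hp).mul_left ((3/2) * (‖a‖ * ‖p‖ ^ N)))
  have hb : ‖-(a * p ^ (n + N))‖ ≤ 1/2 := by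
    rw [norm_neg, norm_mul, norm_pow, pow_add, ← mul_assoc]
    have h1 : ‖p‖ ^ n ≤ 1 := pow_le_one₀ (norm_nonneg p) hp.le
    have h2 : ‖a‖ * ‖p‖ ^ N ≤ 1/2 := (hN N le_rfl).le
    nlinarith [norm_nonneg a, pow_nonneg (norm_nonneg p) N, pow_nonneg (norm_nonneg p) n]
  have := Complex.norm_log_one_add_half_le_self hb
  rw [← sub_eq_add_neg] at this
  calc ‖Complex.log (1 - a * p ^ (n + N))‖ ≤ 3/2 * ‖-(a * p ^ (n + N))‖ := this
    _ = 3/2 * (‖a‖ * (‖p‖ ^ N * ‖p‖ ^ n)) := by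
        rw [norm_neg, norm_mul, norm_pow, pow_add]; ring
    _ = 3/2 * (‖a‖ * ‖p‖ ^ N) * ‖p‖ ^ n := by ring

lemma qPochInf_eq_exp (a p : ℂ) (hp : ‖p‖ < 1) (hf : ∀ i : ℕ, 1 - a * p ^ i ≠ 0) :
    qPochInf a p = Complex.exp (∑' i : ℕ, Complex.log (1 - a * p ^ i)) := by
  have h := Complex.cexp_tsum_eq_tprod (f := fun n : ℕ => 1 - a * p ^ n) (fun n => hf n)
    (summable_log_one_sub a p hp)
  exact h.symm

lemma qPochInf_ne_zero (a p : ℂ) (hp : ‖p‖ < 1) (hf : ∀ i : ℕ, 1 - a * p ^ i ≠ 0) :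
    qPochInf a p ≠ 0 := by
  rw [qPochInf_eq_exp a p hp hf]
  exact Complex.exp_ne_zero _

lemma multipliable_one_sub (a p : ℂ) (hp : ‖p‖ < 1) (hf : ∀ i : ℕ, 1 - a * p ^ i ≠ 0) :
    Multipliable fun i : ℕ => 1 - a * p ^ i :=
  Complex.multipliable_of_summable_log (summable_log_one_sub a p hp)

set_option maxHeartbeats 1000000 in
lemma qPochInf_rec (a p : ℂ) (hp : ‖p‖ < 1) (hf : ∀ i : ℕ, 1 - a * p ^ i ≠ 0) :
    qPochInf a p = (1 - a) * qPochInf (a * p) p := by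
  have hf' : ∀ i : ℕ, 1 - (a * p) * p ^ i ≠ 0 := by
    intro i
    have := hf (i + 1)
    rwa [pow_succ', ← mul_assoc] at this
  have hm : Multipliable fun n : ℕ => 1 - a * p ^ (n + 1) := by
    have := multipliable_one_sub (a * p) p hp hf'
    apply this.congr
    intro b
    rw [pow_succ', ← mul_assoc]
  unfold qPochInf
  rw [tprod_eq_zero_mul' hm, pow_zero, mul_one]
  congr 1
  apply tprod_congr
  intro b
  rw [pow_succ', ← mul_assoc]

lemma one_sub_neg_I_real_ne (r : ℝ) : (1 : ℂ) - (-Complex.I * (r : ℂ)) ≠ 0 := by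
  intro h
  have := congrArg Complex.re h
  simp [Complex.sub_re, Complex.mul_re] at this

theorem psi0_ground_state (q γ : ℝ) (hq : 1 < q) (α β : ℂ) (hα : α ≠ 0) (hβ : β ≠ 0)
    (hαβ : α / β = ((q ^ (-γ) : ℝ) : ℂ)) :
    (∀ x : ℝ,
      qPochInf (-Complex.I * ((q ^ (-γ) * (q - q⁻¹) * q ^ (-(1 : ℝ) / 2) : ℝ) : ℂ) * (x : ℂ))
          ((q : ℂ) ^ (-2 : ℤ)) ≠ 0 ∧ psi0 q γ x ≠ 0) ∧
    (∀ x : ℝ, x ≠ 0 →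
      α * (q : ℂ) * psi0 q γ (q ^ 2 * x) -
        Complex.I * β * ((q ^ ((1 : ℝ) / 2) : ℝ) : ℂ) * Dq q (psi0 q γ) (q * x) = 0) := by
  have hq0 : (0 : ℝ) < q := lt_trans one_pos hq
  set c : ℝ := q ^ (-γ) * (q - q⁻¹) * q ^ (-(1 : ℝ) / 2) with hc
  set p : ℂ := (q : ℂ) ^ (-2 : ℤ) with hpdef
  have hpreal : p = ((q ^ (-2 : ℤ) : ℝ) : ℂ) := by push_cast [hpdef]; ring
  have hpnorm : ‖p‖ < 1 := by
    rw [hpreal, Complex.norm_real, Real.norm_eq_abs,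
      abs_of_pos (zpow_pos hq0 _)]
    rw [zpow_neg]
    apply inv_lt_one_of_one_lt₀
    rw [show ((2:ℤ)) = ((2:ℕ) : ℤ) from rfl, zpow_natCast]
    exact one_lt_pow₀ hq (by norm_num)
  -- factors are nonzero
  have hfact : ∀ x : ℝ, ∀ i : ℕ,
      (1 : ℂ) - (-Complex.I * (c : ℂ) * (x : ℂ)) * p ^ i ≠ 0 := by
    intro x i
    have : (-Complex.I * (c : ℂ) * (x : ℂ)) * p ^ i
        = -Complex.I * ((c * x * (q ^ (-2 : ℤ)) ^ i : ℝ) : ℂ) := by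
      rw [hpreal]; push_cast; ring
    rw [this]
    exact one_sub_neg_I_real_ne _
  have hwell : ∀ x : ℝ,
      qPochInf (-Complex.I * (c : ℂ) * (x : ℂ)) p ≠ 0 := fun x =>
    qPochInf_ne_zero _ _ hpnorm (hfact x)
  have hpsi : ∀ x : ℝ, psi0 q γ x =
      (qPochInf (-Complex.I * (c : ℂ) * (x : ℂ)) p)⁻¹ := fun x => rfl
  have hpsine : ∀ x : ℝ, psi0 q γ x ≠ 0 := fun x => by
    rw [hpsi]; exact inv_ne_zero (hwell x)
  refine ⟨fun x => ⟨hwell x, hpsine x⟩, ?_⟩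
  intro x hx
  -- key recurrence at scaled argument
  have hQ : (q : ℂ) ≠ 0 := by exact_mod_cast ne_of_gt hq0
  have hq2 : ((q : ℂ) ^ 2) * p = 1 := by
    rw [hpdef, show ((-2 : ℤ)) = -((2:ℕ) : ℤ) from rfl, zpow_neg, zpow_natCast]
    exact mul_inv_cancel₀ (pow_ne_zero 2 hQ)
  set a : ℂ := -Complex.I * (c : ℂ) * (x : ℂ) with ha
  set z : ℂ := -Complex.I * (c : ℂ) * ((q : ℂ) ^ 2 * (x : ℂ)) with hz
  have hzx : z = a * (q : ℂ) ^ 2 := by rw [hz, ha]; ring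
  have harg : (-Complex.I * (c : ℂ) * ((q ^ 2 * x : ℝ) : ℂ)) = z := by
    rw [hz]; push_cast; ring
  have hrec : qPochInf z p = (1 - z) * qPochInf a p := by
    have h1 : ∀ i : ℕ, (1 : ℂ) - z * p ^ i ≠ 0 := by
      intro i
      have := hfact (q ^ 2 * x) i
      rwa [show ((-Complex.I * (c : ℂ) * ((q^2*x : ℝ) : ℂ))) = z from harg] at this
    have h2 := qPochInf_rec z p hpnorm h1
    have hzp : z * p = a := by rw [hzx, mul_assoc, hq2, mul_one]
    rw [h2, hzp]
  set A : ℂ := qPochInf a p with hA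
  have hAne : A ≠ 0 := hwell x
  have hzne : (1 : ℂ) - z ≠ 0 := by
    have := hfact (q ^ 2 * x) 0
    rwa [pow_zero, mul_one, harg] at this
  -- values of psi0
  have hv1 : psi0 q γ (q ^ 2 * x) = ((1 - z) * A)⁻¹ := by
    rw [hpsi, harg, hrec]
  have hv2 : psi0 q γ (q * (q * x)) = ((1 - z) * A)⁻¹ := by
    rw [show q * (q * x) = q ^ 2 * x by ring, hv1]
  have hv3 : psi0 q γ (q⁻¹ * (q * x)) = A⁻¹ := by
    rw [show q⁻¹ * (q * x) = x by field_simp, hpsi]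
  -- expand Dq
  rw [Dq, hv1, hv2, hv3]
  have hxne : (x : ℂ) ≠ 0 := by exact_mod_cast hx
  have hlam : (q : ℂ) - (q : ℂ)⁻¹ ≠ 0 := by
    rw [show (q : ℂ) - (q : ℂ)⁻¹ = ((q - q⁻¹ : ℝ) : ℂ) by push_cast; ring]
    have : (0:ℝ) < q - q⁻¹ := by
      have : q⁻¹ < 1 := inv_lt_one_of_one_lt₀ hq
      linarith
    exact_mod_cast ne_of_gt this
  have hqx : ((q * x : ℝ) : ℂ) ≠ 0 := by push_cast; exact mul_ne_zero hQ hxne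
  -- the scalar identity: α = β * q^{-γ}
  have hαval : α = β * ((q ^ (-γ) : ℝ) : ℂ) := by
    field_simp at hαβ; linear_combination hαβ
  -- real rpow facts
  have hhalf : (q ^ ((1:ℝ)/2) : ℝ) * (q ^ (-(1:ℝ)/2) : ℝ) = 1 := by
    rw [← Real.rpow_add hq0]; norm_num
  -- now a pure algebra computation
  have hcC : (c : ℂ) = ((q ^ (-γ) : ℝ) : ℂ) * ((q : ℂ) - (q : ℂ)⁻¹) *
      ((q ^ (-(1:ℝ)/2) : ℝ) : ℂ) := by rw [hc]; push_cast; ring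
  have hhalfC : ((q ^ ((1:ℝ)/2) : ℝ) : ℂ) * ((q ^ (-(1:ℝ)/2) : ℝ) : ℂ) = 1 := by
    exact_mod_cast hhalf
  rw [hzx] at hzne ⊢
  set B : ℂ := (1 - a * (q:ℂ)^2) * A with hB
  have hBne : B ≠ 0 := mul_ne_zero hzne hAne
  have hdiff : B⁻¹ - A⁻¹ = (a * (q:ℂ)^2) * B⁻¹ := by
    rw [hB]; field_simp; ring
  have hinner : α * (q:ℂ) - Complex.I * β * ((q ^ ((1:ℝ)/2) : ℝ) : ℂ) * (a * (q:ℂ)^2) /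
      (((q * x : ℝ) : ℂ) * ((q:ℂ) - (q:ℂ)⁻¹)) = 0 := by
    have hq21 : (q:ℂ) * (q:ℂ) - 1 ≠ 0 := by
      have : (1:ℝ) < q * q := by nlinarith
      intro h
      have h2 : ((q * q - 1 : ℝ) : ℂ) = 0 := by push_cast; linear_combination h
      have := Complex.ofReal_eq_zero.mp h2
      linarith
    rw [ha, hcC, hαval]
    push_cast
    field_simp [hq21]
    rw [show (-(1:ℝ)/2) = -(1/2) by ring] at hhalfC
    rw [mul_right_comm _ ((q:ℂ)^2 - 1), mul_div_assoc, div_self (by rwa [sq]), mul_one,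
      mul_assoc (Complex.I ^ 2), hhalfC]
    simp
  rw [hdiff]
  linear_combination B⁻¹ * hinner
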